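/- Assume each constant-term matrix D_{i,0} (the entrywise coefficient of the constant monomial in D_i) is invertible in F^{w×w}. Then every exponent vector e with bs(e) = w² satisfies: D_e lies in the F-span of {D_f : bS(f) ⊊ bS(e)}. -/

import Mathlib

open Finset

/-- The block-support `bS(e)` of an exponent vector `e`: the set of blocks `i` (under the
block assignment `π` of variables to blocks) on which `e` is not identically zero. -/
def blockSupport {n d : ℕ} (π : Fin n → Fin d) (e : Fin n → ℕ) : Finset (Fin d) :=
  Finset.univ.filter fun i => ∃ j, π j = i ∧ e j ≠ 0

/-- The monomial `x_i^{e_i}`: the restriction of the exponent vector `e` to block `i`. -/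
noncomputable def blockMonomial {n d : ℕ} (π : Fin n → Fin d) (i : Fin d)
    (e : Fin n → ℕ) : Fin n →₀ ℕ :=
  Finsupp.equivFunOnFinite.symm fun j => if π j = i then e j else 0

/-- `D_e = D_{1,e_1}·D_{2,e_2}⋯D_{d,e_d}`, the coefficient of `x^e` in the matrix product
`D_1·D_2⋯D_d` (the variable sets of the factors being disjoint). -/
noncomputable def blockCoeff {F : Type*} [Field F] {w n d : ℕ} (π : Fin n → Fin d)
    (D : Fin d → Matrix (Fin w) (Fin w) (MvPolynomial (Fin n) F)) (e : Fin n → ℕ) :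
    Matrix (Fin w) (Fin w) F :=
  ((List.finRange d).map fun i =>
    (D i).map (MvPolynomial.coeff (blockMonomial π i e))).prod

section Aux

theorem mem_finRange_drop_take {d a b : ℕ} {i : Fin d}
    (h : i ∈ ((List.finRange d).take b).drop a) : a ≤ (i:ℕ) ∧ (i:ℕ) < b := by
  obtain ⟨j, hj, hje⟩ := List.mem_iff_getElem.1 h
  rw [List.getElem_drop, List.getElem_take, List.getElem_finRange] at hje
  simp only [List.length_drop, List.length_take, List.length_finRange] at hj
  subst hje
  simp only [Fin.val_mk, Fin.coe_cast]
  omega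

theorem mem_finRange_take {d b : ℕ} {i : Fin d}
    (h : i ∈ (List.finRange d).take b) : (i:ℕ) < b := by
  rw [← List.drop_zero (l := (List.finRange d).take b)] at h
  exact (mem_finRange_drop_take h).2

theorem mem_finRange_drop {d a : ℕ} {i : Fin d}
    (h : i ∈ (List.finRange d).drop a) : a ≤ (i:ℕ) := by
  obtain ⟨j, hj, hje⟩ := List.mem_iff_getElem.1 h
  rw [List.getElem_drop, List.getElem_finRange] at hje
  subst hje
  simp

variable {M : Type*} [Monoid M] {d : ℕ}

/-- prefix product -/
def lpre (f : Fin d → M) (t : ℕ) : M := (((List.finRange d).take t).map f).prod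

/-- suffix product -/
def lsuf (f : Fin d → M) (t : ℕ) : M := (((List.finRange d).drop t).map f).prod

/-- middle product -/
def lmid (f : Fin d → M) (a b : ℕ) : M := ((((List.finRange d).take b).drop a).map f).prod

theorem lsplit (f : Fin d → M) (t : ℕ) :
    ((List.finRange d).map f).prod = lpre f t * lsuf f t := by
  rw [lpre, lsuf, ← List.prod_append, ← List.map_append, List.take_append_drop]

theorem lpre_split (f : Fin d → M) {a b : ℕ} (hab : a ≤ b) :
    lpre f b = lpre f a * lmid f a b := by
  conv_lhs => rw [lpre, ← List.take_append_drop a ((List.finRange d).take b)]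
  rw [List.map_append, List.prod_append, List.take_take, min_eq_left hab]
  rfl

theorem lpre_congr {f g : Fin d → M} {t : ℕ} (h : ∀ i : Fin d, (i:ℕ) < t → f i = g i) :
    lpre f t = lpre g t := by
  unfold lpre
  rw [List.map_congr_left fun i hi => h i (mem_finRange_take hi)]

theorem lsuf_congr {f g : Fin d → M} {t : ℕ} (h : ∀ i : Fin d, t ≤ (i:ℕ) → f i = g i) :
    lsuf f t = lsuf g t := by
  unfold lsuf
  rw [List.map_congr_left fun i hi => h i (mem_finRange_drop hi)]

theorem lmid_congr {f g : Fin d → M} {a b : ℕ}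
    (h : ∀ i : Fin d, a ≤ (i:ℕ) → (i:ℕ) < b → f i = g i) :
    lmid f a b = lmid g a b := by
  unfold lmid
  rw [List.map_congr_left fun i hi =>
    h i (mem_finRange_drop_take hi).1 (mem_finRange_drop_take hi).2]

theorem lpre_isUnit {f : Fin d → M} (h : ∀ i, IsUnit (f i)) (t : ℕ) : IsUnit (lpre f t) := by
  apply List.prod_isUnit
  intro x hx
  obtain ⟨i, _, rfl⟩ := List.mem_map.1 hx
  exact h i

end Aux

section BM

variable {n d : ℕ} (π : Fin n → Fin d) (i : Fin d)

theorem blockMonomial_congr {e₁ e₂ : Fin n → ℕ} (h : ∀ j, π j = i → e₁ j = e₂ j) :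
    blockMonomial π i e₁ = blockMonomial π i e₂ := by
  unfold blockMonomial
  congr 1
  funext j
  by_cases hj : π j = i <;> simp [hj, h j]

theorem blockMonomial_eq_zero {e₁ : Fin n → ℕ} (h : ∀ j, π j = i → e₁ j = 0) :
    blockMonomial π i e₁ = 0 := by
  unfold blockMonomial
  rw [Equiv.symm_apply_eq]
  funext j
  by_cases hj : π j = i <;> simp [hj, h j]

end BM

set_option maxHeartbeats 1000000 in
/-- If all constant-term matrices `D_{i,0}` are invertible, then every coefficient `D_e`
with block-support size exactly `w²` lies in the span of the coefficients with strictly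
smaller block-support. -/
theorem block_support_w_sq_dependent (F : Type*) [Field F] (w n d : ℕ)
    (hw : 1 ≤ w) (hd : 1 ≤ d) (π : Fin n → Fin d)
    (D : Fin d → Matrix (Fin w) (Fin w) (MvPolynomial (Fin n) F))
    (hvars : ∀ i a b, ∀ j ∈ (D i a b).vars, π j = i)
    (hinv : ∀ i, IsUnit ((D i).map (MvPolynomial.coeff (0 : Fin n →₀ ℕ))))
    (e : Fin n → ℕ) (he : (blockSupport π e).card = w ^ 2) :
    blockCoeff π D e ∈ Submodule.span F
      {M | ∃ f, blockSupport π f ⊂ blockSupport π e ∧ M = blockCoeff π D f} := by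
  classical
  set S : Finset (Fin d) := blockSupport π e with hS
  -- the coefficient-matrix factors of `D_e`, and the constant factors
  set Mm : Fin d → Matrix (Fin w) (Fin w) F :=
    (fun i => (D i).map (MvPolynomial.coeff (blockMonomial π i e))) with hMm
  set Cc : Fin d → Matrix (Fin w) (Fin w) F :=
    (fun i => (D i).map (MvPolynomial.coeff (0 : Fin n →₀ ℕ))) with hCc
  have hw2 : 0 < w ^ 2 := by positivity
  have hCu : ∀ t, IsUnit ((lpre Cc t).det) := fun t =>
    (Matrix.isUnit_iff_isUnit_det _).1 (lpre_isUnit (fun i => hinv i) t)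
  have hMCoff : ∀ i : Fin d, i ∉ S → Mm i = Cc i := by
    intro i hi
    have h0 : blockMonomial π i e = 0 := by
      apply blockMonomial_eq_zero
      intro j hj
      by_contra hj0
      exact hi (Finset.mem_filter.2 ⟨Finset.mem_univ _, ⟨j, hj, hj0⟩⟩)
    rw [hMm, hCc]
    simp only [h0]
  -- enumeration of S in increasing order, and the cut points t k
  set σ : Fin (w ^ 2) ↪o Fin d := S.orderEmbOfFin he with hσ
  set t : ℕ → ℕ := (fun k => if h : k < w ^ 2 then ((σ ⟨k, h⟩ : Fin d) : ℕ) else d) with ht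
  have ht_mono : ∀ {a b : ℕ}, a ≤ b → t a ≤ t b := by
    intro a b hab
    rw [ht]
    dsimp only
    split_ifs with h1 h2 h2
    · exact σ.monotone (by exact hab)
    · exact le_of_lt (σ ⟨a, h1⟩).isLt
    · omega
    · exact le_rfl
  have ht_lt : ∀ {a b : ℕ}, a < b → b ≤ w ^ 2 → t a < t b := by
    intro a b hab hb
    have ha : a < w ^ 2 := lt_of_lt_of_le hab hb
    rw [ht]
    dsimp only
    rw [dif_pos ha]
    split_ifs with h2
    · exact σ.strictMono (by exact hab)
    · exact (σ ⟨a, ha⟩).isLt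
  -- the family of w^2+1 matrices
  set v : Fin (w ^ 2 + 1) → Matrix (Fin w) (Fin w) F :=
    (fun k => lpre Mm (t k) * (lpre Cc (t k))⁻¹) with hv
  have hdep : ¬ LinearIndependent F v := by
    intro h
    have h2 := h.fintype_card_le_finrank
    simp only [Module.finrank_matrix, Fintype.card_fin, Module.finrank_self, mul_one] at h2
    rw [← pow_two] at h2
    exact Nat.not_succ_le_self _ h2
  obtain ⟨g, hg0, k0, hk0⟩ := Fintype.not_linearIndependent_iff.1 hdep
  set T : Finset (Fin (w ^ 2 + 1)) := Finset.univ.filter (fun k => g k ≠ 0) with hT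
  have hTne : T.Nonempty := ⟨k0, by simp [hT, hk0]⟩
  set m : Fin (w ^ 2 + 1) := T.max' hTne with hm
  have hgm : g m ≠ 0 := by
    have hmT : m ∈ T := T.max'_mem hTne
    simp only [hT, Finset.mem_filter] at hmT
    exact hmT.2
  have hgt : ∀ k, m < k → g k = 0 := by
    intro k hk
    by_contra h
    exact absurd (T.le_max' k (by simp [hT, h])) (not_le.2 hk)
  -- m is positive, because v 0 = 1
  have hv0 : v 0 = 1 := by
    have hpre : lpre Mm (t 0) = lpre Cc (t 0) := by
      apply lpre_congr
      intro i hi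
      apply hMCoff
      intro hiS
      obtain ⟨k', hk'⟩ : ∃ k', σ k' = i := by
        have hr := S.range_orderEmbOfFin he
        have : i ∈ Set.range (S.orderEmbOfFin he) := by
          rw [hr]; exact Finset.mem_coe.2 hiS
        rw [← hσ] at this
        exact this
      have h1 : σ ⟨0, hw2⟩ ≤ σ k' := σ.monotone (by simp [Fin.le_def])
      rw [ht] at hi
      simp only [dif_pos hw2] at hi
      rw [hk'] at h1
      have h2 : ((σ ⟨0, hw2⟩ : Fin d) : ℕ) ≤ (i : ℕ) := h1
      omega
    rw [hv]
    dsimp only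
    rw [Fin.val_zero, hpre, Matrix.mul_nonsing_inv _ (hCu _)]
  have hm0 : (0 : Fin (w ^ 2 + 1)) < m := by
    rcases Fin.eq_zero_or_eq_succ m with h | h
    · exfalso
      have hall : ∀ k, k ≠ (0 : Fin (w ^ 2 + 1)) → g k = 0 := by
        intro k hk
        apply hgt
        rw [h]
        exact Fin.pos_of_ne_zero hk
      have : ∑ i, g i • v i = g 0 • v 0 := by
        rw [Fintype.sum_eq_single 0]
        intro k hk
        rw [hall k hk, zero_smul]
      rw [hg0, hv0] at this
      have h00 : (0 : Matrix (Fin w) (Fin w) F) ⟨0, hw⟩ ⟨0, hw⟩ =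
          (g 0 • (1 : Matrix (Fin w) (Fin w) F)) ⟨0, hw⟩ ⟨0, hw⟩ := by rw [this]
      rw [Matrix.smul_apply, Matrix.one_apply_eq, Matrix.zero_apply, smul_eq_mul,
        mul_one] at h00
      rw [h] at hgm
      exact hgm h00.symm
    · obtain ⟨j, hj⟩ := h
      rw [hj]
      exact Fin.succ_pos j
  -- express v m in terms of earlier v k
  have hsum : g m • v m + ∑ k ∈ Finset.univ.filter (· < m), g k • v k = 0 := by
    have h2 : (Finset.univ.filter (· ≤ m)) = insert m (Finset.univ.filter (· < m)) := by
      ext k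
      simp only [Finset.mem_filter, Finset.mem_univ, true_and, Finset.mem_insert]
      constructor
      · intro hk
        rcases lt_or_eq_of_le hk with h | h
        · exact Or.inr (by simpa using h)
        · exact Or.inl h
      · rintro (rfl | hk)
        · exact le_rfl
        · exact le_of_lt (by simpa using hk)
    have hmnot : m ∉ Finset.univ.filter (· < m) := by
      simp only [Finset.mem_filter, Finset.mem_univ, true_and]
      exact lt_irrefl m
    calc g m • v m + ∑ k ∈ Finset.univ.filter (· < m), g k • v k
        = ∑ k ∈ insert m (Finset.univ.filter (· < m)), g k • v k :=
          (Finset.sum_insert (f := fun k => g k • v k) hmnot).symm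
      _ = ∑ k ∈ Finset.univ.filter (· ≤ m), g k • v k := by rw [h2]
      _ = ∑ k, g k • v k := by
          apply Finset.sum_subset (Finset.filter_subset _ _)
          intro x _ hx
          simp only [Finset.mem_filter, Finset.mem_univ, true_and, not_le] at hx
          rw [hgt x hx, zero_smul]
      _ = 0 := hg0
  have key : v m = ∑ k ∈ Finset.univ.filter (· < m), (-(g m)⁻¹ * g k) • v k := by
    have h1 : g m • v m = -∑ k ∈ Finset.univ.filter (· < m), g k • v k := by
      rw [eq_neg_iff_add_eq_zero]
      exact hsum
    have h2 : v m = (g m)⁻¹ • (g m • v m) := by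
      rw [smul_smul, inv_mul_cancel₀ hgm, one_smul]
    rw [h2, h1, smul_neg, Finset.smul_sum]
    rw [← Finset.sum_neg_distrib]
    apply Finset.sum_congr rfl
    intro k _
    rw [smul_smul, ← neg_smul, neg_mul]
  -- the masked exponent vectors
  set fmask : ℕ → ℕ → (Fin n → ℕ) :=
    (fun a b j => if ((π j : ℕ) < a ∨ b ≤ (π j : ℕ)) then e j else 0) with hfmask
  have hfac : ∀ a b (i : Fin d),
      (D i).map (MvPolynomial.coeff (blockMonomial π i (fmask a b))) =
        if ((i : ℕ) < a ∨ b ≤ (i : ℕ)) then Mm i else Cc i := by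
    intro a b i
    by_cases hp : ((i : ℕ) < a ∨ b ≤ (i : ℕ))
    · have hbm : blockMonomial π i (fmask a b) = blockMonomial π i e := by
        apply blockMonomial_congr
        intro j hj
        rw [hfmask]
        dsimp only
        rw [hj, if_pos hp]
      rw [if_pos hp, hMm, hbm]
    · have hbm : blockMonomial π i (fmask a b) = 0 := by
        apply blockMonomial_eq_zero
        intro j hj
        rw [hfmask]
        dsimp only
        rw [hj, if_neg hp]
      rw [if_neg hp, hCc, hbm]
  have hmaskCoeff : ∀ {a b : ℕ}, a ≤ b →
      blockCoeff π D (fmask a b) = lpre Mm a * lmid Cc a b * lsuf Mm b := by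
    intro a b hab
    rw [blockCoeff]
    rw [show (fun i => (D i).map (MvPolynomial.coeff (blockMonomial π i (fmask a b)))) =
      (fun i : Fin d => if ((i : ℕ) < a ∨ b ≤ (i : ℕ)) then Mm i else Cc i) from
      funext (hfac a b)]
    rw [lsplit _ b, lpre_split _ hab]
    congr 1
    · congr 1
      · exact lpre_congr fun i hi => if_pos (Or.inl hi)
      · exact lmid_congr fun i hi1 hi2 => if_neg (by omega)
    · exact lsuf_congr fun i hi => if_pos (Or.inr hi)
  have hmaskSupp : ∀ a b : ℕ, blockSupport π (fmask a b) ⊆ S := by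
    intro a b i hi
    rw [blockSupport, Finset.mem_filter] at hi
    obtain ⟨_, j, hj, hj0⟩ := hi
    rw [hS, blockSupport, Finset.mem_filter]
    refine ⟨Finset.mem_univ _, j, hj, ?_⟩
    rw [hfmask] at hj0
    dsimp only at hj0
    intro hej
    rw [hej] at hj0
    simp at hj0
  have hmaskNotMem : ∀ a b : ℕ, ∀ i : Fin d, a ≤ (i : ℕ) → (i : ℕ) < b →
      i ∉ blockSupport π (fmask a b) := by
    intro a b i h1 h2 hi
    rw [blockSupport, Finset.mem_filter] at hi
    obtain ⟨_, j, hj, hj0⟩ := hi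
    rw [hfmask] at hj0
    dsimp only at hj0
    rw [hj, if_neg (by omega)] at hj0
    exact hj0 rfl
  -- the main computation
  have hDe : blockCoeff π D e =
      ∑ k ∈ Finset.univ.filter (· < m),
        (-(g m)⁻¹ * g k) • blockCoeff π D (fmask (t k) (t m)) := by
    have hsplit1 : blockCoeff π D e = lpre Mm (t m) * lsuf Mm (t m) := by
      rw [blockCoeff, ← hMm, lsplit Mm (t m)]
    have hvm : lpre Mm (t m) = v m * lpre Cc (t m) := by
      rw [hv]
      dsimp only
      rw [mul_assoc, Matrix.nonsing_inv_mul _ (hCu _), mul_one]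
    rw [hsplit1, hvm, key, Finset.sum_mul, Finset.sum_mul]
    apply Finset.sum_congr rfl
    intro k hk
    rw [Finset.mem_filter] at hk
    have hkm : (k : ℕ) ≤ (m : ℕ) := le_of_lt hk.2
    have htkm : t (k : ℕ) ≤ t (m : ℕ) := ht_mono hkm
    rw [hmaskCoeff htkm]
    rw [smul_mul_assoc, smul_mul_assoc]
    congr 1
    rw [hv]
    dsimp only
    rw [lpre_split Cc htkm, ← mul_assoc, mul_assoc (lpre Mm (t ↑k)),
      Matrix.nonsing_inv_mul _ (hCu _), mul_one, mul_assoc]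
  rw [hDe]
  apply Submodule.sum_mem
  intro k hk
  rw [Finset.mem_filter] at hk
  apply Submodule.smul_mem
  apply Submodule.subset_span
  refine ⟨fmask (t k) (t m), ?_, rfl⟩
  have hkw : (k : ℕ) < w ^ 2 := by
    have := hk.2
    have hm2 : (m : ℕ) ≤ w ^ 2 := Nat.lt_succ_iff.1 m.isLt
    have := Fin.lt_def.1 this
    omega
  have htk : t (k : ℕ) = ((σ ⟨k, hkw⟩ : Fin d) : ℕ) := by
    rw [ht]; dsimp only; rw [dif_pos hkw]
  have hσk : (σ ⟨(k : ℕ), hkw⟩ : Fin d) ∈ S := S.orderEmbOfFin_mem he _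
  have htlt : t (k : ℕ) < t (m : ℕ) :=
    ht_lt (Fin.lt_def.1 hk.2) (Nat.lt_succ_iff.1 m.isLt)
  constructor
  · exact hmaskSupp _ _
  · intro hcon
    have hmem := hcon hσk
    exact hmaskNotMem (t k) (t m) _ (le_of_eq htk) (by rw [← htk]; exact htlt) hmem
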